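/- Let G be a group and ρ: G → Sp(1) an irreducible projective representation. Then the set of group homomorphisms χ: G → {±1} such that the twisted representation ρ^χ is conjugate to ρ in Sp(1) is a subgroup of Hom(G, {±1}) with at most 4 elements. -/

import Mathlib

noncomputable section

open Quaternion

/-- A projective representation of `G` in the group `Sp(1)` of unit quaternions:
a function with values of norm one such that `ρ(gh)ρ(h)⁻¹ρ(g)⁻¹ ∈ {±1}`. -/
def IsProjRep {G : Type*} [Group G] (ρ : G → ℍ[ℝ]) : Prop :=
  (∀ g : G, ‖ρ g‖ = 1) ∧
    ∀ g h : G, ρ (g * h) * (ρ h)⁻¹ * (ρ g)⁻¹ = 1 ∨ ρ (g * h) * (ρ h)⁻¹ * (ρ g)⁻¹ = -1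

/-- A homomorphism from `G` into the subgroup `{±1}` of unit quaternions. -/
def IsSignHom {G : Type*} [Group G] (χ : G → ℍ[ℝ]) : Prop :=
  (∀ g : G, χ g = 1 ∨ χ g = -1) ∧ ∀ g h : G, χ (g * h) = χ g * χ h

/-- A projective representation `ρ` is irreducible if the centralizer of its image in `Sp(1)`
is `{±1}`. -/
def IsIrred {G : Type*} [Group G] (ρ : G → ℍ[ℝ]) : Prop :=
  ∀ q : ℍ[ℝ], ‖q‖ = 1 → (∀ g : G, q * ρ g = ρ g * q) → q = 1 ∨ q = -1

def qi : ℍ[ℝ] := ⟨0, 1, 0, 0⟩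
def qj : ℍ[ℝ] := ⟨0, 0, 1, 0⟩
def qk : ℍ[ℝ] := ⟨0, 0, 0, 1⟩

/-- The quaternion group `Q8 = {±1, ±i, ±j, ±k}` inside the unit quaternions. -/
def Q8 : Set ℍ[ℝ] := {1, -1, qi, -qi, qj, -qj, qk, -qk}

namespace Stab4Aux

lemma unit_ne_zero {u : ℍ[ℝ]} (h : ‖u‖ = 1) : u ≠ 0 := by
  intro h0; rw [h0] at h; simp at h

lemma neg_one_ne_one : ((-1 : ℍ[ℝ]) ≠ 1) := by
  intro h
  have := congrArg QuaternionAlgebra.re h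
  simp at this; norm_num at this

lemma inv_eq_star {u : ℍ[ℝ]} (h : ‖u‖ = 1) : u⁻¹ = star u := by
  rw [Quaternion.inv_def]
  rw [show Quaternion.normSq u = 1 by rw [Quaternion.normSq_eq_norm_mul_self, h]; ring]
  simp

lemma sum_sq_eq_one {u : ℍ[ℝ]} (h : ‖u‖ = 1) :
    u.re ^ 2 + u.imI ^ 2 + u.imJ ^ 2 + u.imK ^ 2 = 1 := by
  have := Quaternion.normSq_eq_norm_mul_self u
  rw [h, Quaternion.normSq_def'] at this
  linarith

variable {G : Type*} [Group G]

/-- Multiplied form of the conjugacy condition. -/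
lemma rlz_iff {ρ χ : G → ℍ[ℝ]} {u : ℍ[ℝ]} (hu : u ≠ 0) :
    (∀ g, χ g * ρ g = u * ρ g * u⁻¹) ↔ (∀ g, χ g * ρ g * u = u * ρ g) := by
  constructor <;> intro h g
  · rw [h g, mul_assoc, inv_mul_cancel₀ hu, mul_one]
  · rw [eq_mul_inv_iff_mul_eq₀ hu]; exact h g

/-- Product of realizers. -/
lemma rlz_mul {ρ χ₁ χ₂ : G → ℍ[ℝ]} {u₁ u₂ : ℍ[ℝ]}
    (hs₁ : ∀ g, χ₁ g = 1 ∨ χ₁ g = -1) (hs₂ : ∀ g, χ₂ g = 1 ∨ χ₂ g = -1)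
    (h₁ : ∀ g, χ₁ g * ρ g * u₁ = u₁ * ρ g) (h₂ : ∀ g, χ₂ g * ρ g * u₂ = u₂ * ρ g) :
    ∀ g, (χ₁ g * χ₂ g) * ρ g * (u₁ * u₂) = (u₁ * u₂) * ρ g := by
  intro g
  have e₁ := h₁ g
  have e₂ := h₂ g
  rcases hs₁ g with a₁ | a₁ <;> rcases hs₂ g with a₂ | a₂ <;>
      rw [a₁] at e₁ ⊢ <;> rw [a₂] at e₂ ⊢ <;>
      simp only [one_mul, mul_one, neg_one_mul, neg_mul, mul_neg, neg_neg] at e₁ e₂ ⊢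
  · rw [← mul_assoc, e₁, mul_assoc, e₂, ← mul_assoc]
  · rw [← mul_assoc, e₁, mul_assoc, ← mul_neg, e₂, ← mul_assoc]
  · rw [← mul_assoc, ← neg_mul, e₁, mul_assoc, e₂, ← mul_assoc]
  · have e₁' : ρ g * u₁ = -(u₁ * ρ g) := by rw [← e₁, neg_neg]
    have e₂' : ρ g * u₂ = -(u₂ * ρ g) := by rw [← e₂, neg_neg]
    rw [← mul_assoc, e₁', neg_mul, mul_assoc, e₂', mul_neg, neg_neg, ← mul_assoc]

/-- Inverse of a realizer. -/
lemma rlz_inv {ρ χ : G → ℍ[ℝ]} {u : ℍ[ℝ]} (hu : u ≠ 0)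
    (hs : ∀ g, χ g = 1 ∨ χ g = -1)
    (h : ∀ g, χ g * ρ g * u = u * ρ g) :
    ∀ g, χ g * ρ g * u⁻¹ = u⁻¹ * ρ g := by
  intro g
  have e := h g
  rcases hs g with a | a <;> rw [a] at e ⊢ <;>
      simp only [one_mul, neg_one_mul, neg_mul] at e ⊢
  · exact (Commute.inv_right₀ e).eq
  · apply mul_left_cancel₀ hu
    rw [mul_neg, ← mul_assoc, ← mul_assoc, ← e, mul_inv_cancel₀ hu, one_mul,
      neg_mul, neg_neg, mul_assoc, mul_inv_cancel₀ hu, mul_one]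

/-- The real part of a realizer of a nontrivial sign character vanishes. -/
lemma re_eq_zero {ρ χ : G → ℍ[ℝ]} {u : ℍ[ℝ]}
    (hρ1 : ∀ g, ‖ρ g‖ = 1) (hirr : IsIrred ρ)
    (hs : ∀ g, χ g = 1 ∨ χ g = -1)
    (hu : ‖u‖ = 1)
    (h : ∀ g, χ g * ρ g * u = u * ρ g)
    (hne : ∃ g, χ g = -1) : u.re = 0 := by
  have hu0 : u ≠ 0 := unit_ne_zero hu
  have hsq : ∀ g, (u * u) * ρ g = ρ g * (u * u) := by
    intro g
    have e := h g
    rcases hs g with a | a <;> rw [a] at e <;>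
        simp only [one_mul, neg_one_mul, neg_mul] at e
    · rw [mul_assoc, ← e, ← mul_assoc, ← e, mul_assoc]
    · have e' : u * ρ g = -(ρ g * u) := e.symm
      rw [mul_assoc, e', mul_neg, ← mul_assoc, e', neg_mul, neg_neg, mul_assoc]
  rcases hirr (u * u) (by rw [norm_mul, hu, one_mul]) hsq with h2 | h2
  · exfalso
    obtain ⟨g, hg⟩ := hne
    have hρ0 : ρ g ≠ 0 := unit_ne_zero (hρ1 g)
    rcases mul_self_eq_one_iff.mp h2 with h3 | h3 <;>
      · have e := h g
        rw [hg, h3] at e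
        simp only [neg_one_mul, neg_mul, mul_one, one_mul, mul_neg, neg_neg] at e
        have h4 : ρ g + ρ g = 0 := by
          rw [add_eq_zero_iff_eq_neg]
          first
            | exact e.symm
            | exact (neg_eq_iff_eq_neg.mp e)
            | exact e
            | exact (neg_eq_iff_eq_neg.mp e.symm)
        rw [← two_smul ℝ] at h4
        rcases smul_eq_zero.mp h4 with h5 | h5
        · norm_num at h5
        · exact hρ0 h5
  · have hre : (u * u).re = -1 := by rw [h2]; simp
    rw [Quaternion.re_mul] at hre
    have hn := sum_sq_eq_one hu
    nlinarith [hre, hn]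

/-- Orthogonality of imaginary parts of realizers of distinct nontrivial characters. -/
lemma key_orth {ρ χ₁ χ₂ : G → ℍ[ℝ]} {u₁ u₂ : ℍ[ℝ]}
    (hρ1 : ∀ g, ‖ρ g‖ = 1) (hirr : IsIrred ρ)
    (hχ₁ : IsSignHom χ₁) (hχ₂ : IsSignHom χ₂)
    (hu₁ : ‖u₁‖ = 1) (hu₂ : ‖u₂‖ = 1)
    (h₁ : ∀ g, χ₁ g * ρ g * u₁ = u₁ * ρ g) (h₂ : ∀ g, χ₂ g * ρ g * u₂ = u₂ * ρ g)
    (hne₁ : ∃ g, χ₁ g = -1) (hne₂ : ∃ g, χ₂ g = -1)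
    (hne : χ₁ ≠ χ₂) :
    u₁.imI * u₂.imI + u₁.imJ * u₂.imJ + u₁.imK * u₂.imK = 0 := by
  have hu₂0 := unit_ne_zero hu₂
  have hsχ : ∀ g, χ₁ g * χ₂ g = 1 ∨ χ₁ g * χ₂ g = -1 := by
    intro g; rcases hχ₁.1 g with a | a <;> rcases hχ₂.1 g with b | b <;>
      rw [a, b] <;> simp
  have hw : ∀ g, (χ₁ g * χ₂ g) * ρ g * (u₁ * u₂⁻¹) = (u₁ * u₂⁻¹) * ρ g :=
    rlz_mul hχ₁.1 hχ₂.1 h₁ (rlz_inv hu₂0 hχ₂.1 h₂)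
  have hnw : ‖u₁ * u₂⁻¹‖ = 1 := by rw [norm_mul, norm_inv, hu₁, hu₂]; norm_num
  have hneχ : ∃ g, χ₁ g * χ₂ g = -1 := by
    by_contra hcon
    push_neg at hcon
    apply hne
    funext g
    rcases hχ₁.1 g with a | a <;> rcases hχ₂.1 g with b | b <;> rw [a, b] <;>
      first
        | rfl
        | (exfalso; apply hcon g; rw [a, b]; simp)
  have hrw : (u₁ * u₂⁻¹).re = 0 := re_eq_zero hρ1 hirr hsχ hnw hw hneχ
  have hr₁ : u₁.re = 0 := re_eq_zero hρ1 hirr hχ₁.1 hu₁ h₁ hne₁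
  have hr₂ : u₂.re = 0 := re_eq_zero hρ1 hirr hχ₂.1 hu₂ h₂ hne₂
  rw [inv_eq_star hu₂, Quaternion.re_mul] at hrw
  simp only [Quaternion.re_star, Quaternion.imI_star, Quaternion.imJ_star,
    Quaternion.imK_star] at hrw
  rw [hr₁] at hrw
  ring_nf at hrw ⊢
  linarith

lemma inner_vec (a b c d e f : ℝ) :
    (inner ℝ ((WithLp.equiv 2 (Fin 3 → ℝ)).symm ![a, b, c])
      ((WithLp.equiv 2 (Fin 3 → ℝ)).symm ![d, e, f]) : ℝ) = a * d + b * e + c * f := by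
  simp [PiLp.inner_apply, RCLike.inner_apply, Fin.sum_univ_three,
    WithLp.equiv_symm_apply]
  ring

lemma card_bound {ρ : G → ℍ[ℝ]} (hρ1 : ∀ g : G, ‖ρ g‖ = 1) (hirr : IsIrred ρ) :
    ({χ : G → ℍ[ℝ] | IsSignHom χ ∧
        ∃ u : ℍ[ℝ], ‖u‖ = 1 ∧ ∀ g : G, χ g * ρ g = u * ρ g * u⁻¹}.Finite ∧
      {χ : G → ℍ[ℝ] | IsSignHom χ ∧
        ∃ u : ℍ[ℝ], ‖u‖ = 1 ∧ ∀ g : G, χ g * ρ g = u * ρ g * u⁻¹}.ncard ≤ 4) := by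
  classical
  set S := {χ : G → ℍ[ℝ] | IsSignHom χ ∧
      ∃ u : ℍ[ℝ], ‖u‖ = 1 ∧ ∀ g : G, χ g * ρ g = u * ρ g * u⁻¹} with hS
  set one : G → ℍ[ℝ] := fun _ => 1 with hone
  set S' := S \ {one} with hS'def
  have hnt : ∀ χ ∈ S', ∃ g, χ g = -1 := by
    rintro χ ⟨hχS, hχne⟩
    by_contra hcon
    push_neg at hcon
    apply hχne
    simp only [Set.mem_singleton_iff]
    funext g
    rcases hχS.1.1 g with a | a
    · exact a
    · exact absurd a (hcon g)
  -- choose realizers for elements of S'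
  have hmem : ∀ x : ↥S', IsSignHom x.1 ∧
      ∃ u : ℍ[ℝ], ‖u‖ = 1 ∧ ∀ g : G, x.1 g * ρ g = u * ρ g * u⁻¹ := fun x => x.2.1
  let uof : ↥S' → ℍ[ℝ] := fun x => ((hmem x).2).choose
  have huof : ∀ x : ↥S', ‖uof x‖ = 1 ∧ ∀ g : G, x.1 g * ρ g = uof x * ρ g * (uof x)⁻¹ :=
    fun x => ((hmem x).2).choose_spec
  have hmul : ∀ x : ↥S', ∀ g : G, x.1 g * ρ g * uof x = uof x * ρ g :=
    fun x => (rlz_iff (unit_ne_zero (huof x).1)).mp (huof x).2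
  have hre : ∀ x : ↥S', (uof x).re = 0 :=
    fun x => re_eq_zero hρ1 hirr (hmem x).1.1 (huof x).1 (hmul x) (hnt x.1 x.2)
  let V : ↥S' → EuclideanSpace ℝ (Fin 3) := fun x =>
    (WithLp.equiv 2 (Fin 3 → ℝ)).symm ![(uof x).imI, (uof x).imJ, (uof x).imK]
  have hon : Orthonormal ℝ V := by
    rw [orthonormal_iff_ite]
    intro i j
    by_cases hij : i = j
    · subst hij
      simp only [eq_self_iff_true, if_true, V, inner_vec]
      have h1 := sum_sq_eq_one (huof i).1
      have h2 := hre i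
      nlinarith [h1, h2]
    · rw [if_neg hij]
      have hne : i.1 ≠ j.1 := fun h => hij (Subtype.ext h)
      have := key_orth hρ1 hirr (hmem i).1 (hmem j).1 (huof i).1 (huof j).1
        (hmul i) (hmul j) (hnt i.1 i.2) (hnt j.1 j.2) hne
      simp only [V, inner_vec]
      linarith
  have hli := hon.linearIndependent
  have hfinidx : Finite ↥S' := hli.finite
  have hS'fin : S'.Finite := Set.finite_coe_iff.mp hfinidx
  have hcard3 : S'.ncard ≤ 3 := by
    haveI := hS'fin.fintype
    have h1 : Fintype.card ↥S' ≤ Module.finrank ℝ (EuclideanSpace ℝ (Fin 3)) :=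
      hli.fintype_card_le_finrank
    rw [finrank_euclideanSpace_fin] at h1
    rwa [Set.ncard_eq_toFinset_card', Set.toFinset_card]
  have hsub : S ⊆ insert one S' := by
    intro χ hχ
    by_cases h : χ = one
    · exact Set.mem_insert_iff.mpr (Or.inl h)
    · exact Set.mem_insert_iff.mpr (Or.inr ⟨hχ, h⟩)
  have hSfin : S.Finite := (hS'fin.insert one).subset hsub
  refine ⟨hSfin, ?_⟩
  calc S.ncard ≤ (insert one S').ncard := Set.ncard_le_ncard hsub (hS'fin.insert one)
    _ ≤ S'.ncard + 1 := Set.ncard_insert_le one S'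
    _ ≤ 4 := by omega

end Stab4Aux

open Stab4Aux


/-- For an irreducible projective representation `ρ`, the set of sign homomorphisms `χ` with
`ρ^χ` conjugate to `ρ` is a subgroup of `Hom(G,{±1})` having at most four elements. -/
theorem stabilizer_subgroup_card_le_four {G : Type*} [Group G] (ρ : G → ℍ[ℝ])
    (hρ : IsProjRep ρ) (hirr : IsIrred ρ) :
    ((fun _ : G => (1 : ℍ[ℝ])) ∈
        {χ : G → ℍ[ℝ] | IsSignHom χ ∧
          ∃ u : ℍ[ℝ], ‖u‖ = 1 ∧ ∀ g : G, χ g * ρ g = u * ρ g * u⁻¹} ∧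
      (∀ χ₁ ∈ {χ : G → ℍ[ℝ] | IsSignHom χ ∧
          ∃ u : ℍ[ℝ], ‖u‖ = 1 ∧ ∀ g : G, χ g * ρ g = u * ρ g * u⁻¹},
        ∀ χ₂ ∈ {χ : G → ℍ[ℝ] | IsSignHom χ ∧
          ∃ u : ℍ[ℝ], ‖u‖ = 1 ∧ ∀ g : G, χ g * ρ g = u * ρ g * u⁻¹},
        (fun g : G => χ₁ g * χ₂ g) ∈ {χ : G → ℍ[ℝ] | IsSignHom χ ∧
          ∃ u : ℍ[ℝ], ‖u‖ = 1 ∧ ∀ g : G, χ g * ρ g = u * ρ g * u⁻¹}) ∧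
      (∀ χ₁ ∈ {χ : G → ℍ[ℝ] | IsSignHom χ ∧
          ∃ u : ℍ[ℝ], ‖u‖ = 1 ∧ ∀ g : G, χ g * ρ g = u * ρ g * u⁻¹},
        (fun g : G => (χ₁ g)⁻¹) ∈ {χ : G → ℍ[ℝ] | IsSignHom χ ∧
          ∃ u : ℍ[ℝ], ‖u‖ = 1 ∧ ∀ g : G, χ g * ρ g = u * ρ g * u⁻¹})) ∧
    ({χ : G → ℍ[ℝ] | IsSignHom χ ∧
        ∃ u : ℍ[ℝ], ‖u‖ = 1 ∧ ∀ g : G, χ g * ρ g = u * ρ g * u⁻¹}.Finite ∧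
      {χ : G → ℍ[ℝ] | IsSignHom χ ∧
        ∃ u : ℍ[ℝ], ‖u‖ = 1 ∧ ∀ g : G, χ g * ρ g = u * ρ g * u⁻¹}.ncard ≤ 4) := by
  refine ⟨⟨?_, ?_, ?_⟩, card_bound hρ.1 hirr⟩
  · -- trivial character
    exact ⟨⟨fun g => Or.inl rfl, by simp⟩, 1, norm_one, fun g => by simp⟩
  · -- products
    rintro χ₁ ⟨⟨hs₁, hh₁⟩, u₁, hu₁, hr₁⟩ χ₂ ⟨⟨hs₂, hh₂⟩, u₂, hu₂, hr₂⟩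
    refine ⟨⟨?_, ?_⟩, u₁ * u₂, by rw [norm_mul, hu₁, hu₂, one_mul], ?_⟩
    · intro g
      show χ₁ g * χ₂ g = 1 ∨ χ₁ g * χ₂ g = -1
      rcases hs₁ g with a | a <;> rcases hs₂ g with b | b <;> rw [a, b] <;> simp
    · intro g h
      show χ₁ (g * h) * χ₂ (g * h) = (χ₁ g * χ₂ g) * (χ₁ h * χ₂ h)
      rw [hh₁ g h, hh₂ g h]
      rcases hs₂ g with e | e <;> rw [e] <;>
        simp only [one_mul, mul_one, neg_mul, mul_neg, neg_neg, mul_assoc]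
    · exact (rlz_iff (unit_ne_zero (by rw [norm_mul, hu₁, hu₂, one_mul]))).mpr
        (rlz_mul hs₁ hs₂ ((rlz_iff (unit_ne_zero hu₁)).mp hr₁)
          ((rlz_iff (unit_ne_zero hu₂)).mp hr₂))
  · -- inverses
    rintro χ₁ ⟨⟨hs₁, hh₁⟩, u₁, hu₁, hr₁⟩
    have hinv : ∀ g, (χ₁ g)⁻¹ = χ₁ g := by
      intro g
      rcases hs₁ g with a | a <;> rw [a]
      · exact inv_one
      · rw [inv_neg, inv_one]
    refine ⟨⟨fun g => by
      show (χ₁ g)⁻¹ = 1 ∨ (χ₁ g)⁻¹ = -1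
      rw [hinv g]; exact hs₁ g, fun g h => by
      simp only [hinv]; exact hh₁ g h⟩, u₁, hu₁, fun g => by
      simp only [hinv]; exact hr₁ g⟩
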